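/- Contiguous relation for monic little q-Jacobi polynomials in β: for n ≥ 1, p̃_n(x; α, β/q | q) = p̃_n(x; α, β | q) − [αβ q^{2n} (q^n − 1)(α q^n − 1) / ((αβ q^{2n} − 1)(αβ q^{2n} − q))] · p̃_{n−1}(x; α, β | q), as a polynomial identity in x (assuming the denominators are nonzero). -/

import Mathlib

/-- The q-Pochhammer symbol `(a; q)_m`. -/
noncomputable def qPoch (q a : ℝ) (m : ℕ) : ℝ := ∏ j ∈ Finset.range m, (1 - a * q ^ j)

/-- The monic little q-Jacobi polynomial
`p̃_n(x; α, β | q) = (−1)^n q^{n(n−1)/2} ((αq;q)_n / (αβq^{n+1};q)_n) ₂φ₁(q^{-n}, αβq^{n+1}; αq; q, qx)`. -/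
noncomputable def littleQJacobi (q α β : ℝ) (n : ℕ) (x : ℝ) : ℝ :=
  (-1 : ℝ) ^ n * q ^ (n * (n - 1) / 2) *
    (qPoch q (α * q) n / qPoch q (α * β * q ^ (n + 1)) n) *
    ∑ m ∈ Finset.range (n + 1),
      qPoch q (q ^ (-(n : ℤ))) m * qPoch q (α * β * q ^ (n + 1)) m * (q * x) ^ m /
        (qPoch q (α * q) m * qPoch q q m)

lemma qPoch_succ_last (q a : ℝ) (m : ℕ) :
    qPoch q a (m + 1) = qPoch q a m * (1 - a * q ^ m) := Finset.prod_range_succ _ _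

lemma qPoch_succ_first (q a : ℝ) (m : ℕ) :
    qPoch q a (m + 1) = (1 - a) * qPoch q (a * q) m := by
  rw [qPoch, Finset.prod_range_succ', pow_zero, mul_one, mul_comm]
  congr 1
  refine Finset.prod_congr rfl fun j _ => ?_
  ring

lemma qPoch_shift (q a : ℝ) (m : ℕ) :
    (1 - a) * qPoch q (a * q) m = qPoch q a m * (1 - a * q ^ m) :=
  (qPoch_succ_first q a m).symm.trans (qPoch_succ_last q a m)

lemma qPoch_ne_zero {q a : ℝ} (h : ∀ j : ℕ, a * q ^ j ≠ 1) (m : ℕ) : qPoch q a m ≠ 0 := by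
  refine Finset.prod_ne_zero_iff.mpr fun j _ => sub_ne_zero.mpr fun hc => h j hc.symm

set_option maxHeartbeats 2000000 in
/-- Contiguous relation for monic little q-Jacobi polynomials in β. -/
theorem littleQJacobi_shift_beta (q α β : ℝ) (n : ℕ)
    (hq : 0 < q) (hq1 : q < 1) (hn : 1 ≤ n)
    (hα : ∀ m : ℕ, α * q ^ m ≠ 1) (hαβ : ∀ m : ℕ, α * β * q ^ m ≠ 1) :
    ∀ x : ℝ,
      littleQJacobi q α (β / q) n x
        = littleQJacobi q α β n x
          - (α * β * q ^ (2 * n) * (q ^ n - 1) * (α * q ^ n - 1) /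
              ((α * β * q ^ (2 * n) - 1) * (α * β * q ^ (2 * n) - q))) *
            littleQJacobi q α β (n - 1) x := by
  intro x
  obtain ⟨k, rfl⟩ : ∃ k, n = k + 1 := ⟨n - 1, by omega⟩
  have hq0 : q ≠ 0 := ne_of_gt hq
  have hb : α * (β / q) * q ^ (k + 1 + 1) = α * β * q ^ (k + 1) := by
    field_simp
    ring
  have hz1 : (q : ℝ) ^ (-((k + 1 : ℕ) : ℤ)) = (q ^ (k + 1))⁻¹ := by
    rw [zpow_neg, zpow_natCast]
  have hz2 : (q : ℝ) ^ (-((k : ℕ) : ℤ)) = (q ^ k)⁻¹ := by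
    rw [zpow_neg, zpow_natCast]
  simp only [littleQJacobi, Nat.add_sub_cancel, hb, hz1, hz2]

  have hvanish : qPoch q ((q ^ k)⁻¹) (k + 1) = 0 := by
    refine Finset.prod_eq_zero (Finset.self_mem_range_succ k) ?_
    rw [inv_mul_cancel₀ (pow_ne_zero k hq0), sub_self]
  rw [show (∑ m ∈ Finset.range (k + 1),
        qPoch q ((q ^ k)⁻¹) m * qPoch q (α * β * q ^ (k + 1)) m * (q * x) ^ m /
          (qPoch q (α * q) m * qPoch q q m))
      = ∑ m ∈ Finset.range (k + 1 + 1),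
        qPoch q ((q ^ k)⁻¹) m * qPoch q (α * β * q ^ (k + 1)) m * (q * x) ^ m /
          (qPoch q (α * q) m * qPoch q q m) from by
    rw [Finset.sum_range_succ
        (fun m => qPoch q ((q ^ k)⁻¹) m * qPoch q (α * β * q ^ (k + 1)) m * (q * x) ^ m /
          (qPoch q (α * q) m * qPoch q q m)) (k + 1)]
    simp [hvanish]]
  simp only [Finset.mul_sum]
  rw [← Finset.sum_sub_distrib]
  refine Finset.sum_congr rfl fun m hm => ?_
  have h1 : (1 : ℝ) - α * β * q ^ (k + 1) ≠ 0 :=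
    sub_ne_zero.mpr fun h => hαβ (k + 1) h.symm
  have h2 : (1 : ℝ) - α * β * q ^ (k + 1) * q ^ m ≠ 0 := by
    intro h; apply hαβ (k + 1 + m)
    have he : α * β * q ^ (k + 1 + m) = α * β * q ^ (k + 1) * q ^ m := by ring
    rw [he]; linarith
  have h3 : (1 : ℝ) - α * β * q ^ (k + 1) * q ^ k ≠ 0 := by
    intro h; apply hαβ (2 * k + 1)
    have he : α * β * q ^ (2 * k + 1) = α * β * q ^ (k + 1) * q ^ k := by ring
    rw [he]; linarith
  have h4 : (1 : ℝ) - α * β * q ^ (k + 1) * q ^ (k + 1) ≠ 0 := by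
    intro h; apply hαβ (2 * k + 2)
    have he : α * β * q ^ (2 * k + 2) = α * β * q ^ (k + 1) * q ^ (k + 1) := by ring
    rw [he]; linarith
  have hqk1 : (q : ℝ) ^ (k + 1) ≠ 1 := ne_of_lt (pow_lt_one₀ hq.le hq1 k.succ_ne_zero)
  have h5 : (1 : ℝ) - ((q : ℝ) ^ (k + 1))⁻¹ ≠ 0 :=
    sub_ne_zero.mpr fun h => hqk1 (inv_eq_one.mp h.symm)
  have h6 : qPoch q q m ≠ 0 :=
    qPoch_ne_zero (fun j => by rw [← pow_succ']; exact ne_of_lt (pow_lt_one₀ hq.le hq1 j.succ_ne_zero)) m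
  have h7 : qPoch q (α * q) m ≠ 0 :=
    qPoch_ne_zero (fun j => by rw [mul_assoc, ← pow_succ']; exact hα (j + 1)) m
  have h8 : qPoch q (α * β * q ^ (k + 1)) k ≠ 0 :=
    qPoch_ne_zero (fun j => by rw [mul_assoc, ← pow_add]; exact hαβ (k + 1 + j)) k
  have h9 : α * β * q ^ (2 * (k + 1)) - 1 ≠ 0 := sub_ne_zero.mpr (hαβ _)
  have h10 : α * β * q ^ (2 * (k + 1)) - q ≠ 0 := by
    intro h; apply hαβ (2 * k + 1)
    have hq' : q * (α * β * q ^ (2 * k + 1) - 1) = 0 := by linear_combination h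
    rcases mul_eq_zero.mp hq' with h' | h'
    · exact absurd h' hq0
    · linarith
  have e1 : qPoch q (α * β * q ^ (k + 1 + 1)) m
      = qPoch q (α * β * q ^ (k + 1)) m * (1 - α * β * q ^ (k + 1) * q ^ m)
          / (1 - α * β * q ^ (k + 1)) := by
    have hc : α * β * q ^ (k + 1 + 1) = α * β * q ^ (k + 1) * q := by ring
    rw [hc, eq_div_iff h1]
    linear_combination qPoch_shift q (α * β * q ^ (k + 1)) m
  have e2 : qPoch q (α * β * q ^ (k + 1 + 1)) (k + 1)
      = qPoch q (α * β * q ^ (k + 1)) (k + 1) * (1 - α * β * q ^ (k + 1) * q ^ (k + 1))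
          / (1 - α * β * q ^ (k + 1)) := by
    have hc : α * β * q ^ (k + 1 + 1) = α * β * q ^ (k + 1) * q := by ring
    rw [hc, eq_div_iff h1]
    linear_combination qPoch_shift q (α * β * q ^ (k + 1)) (k + 1)
  have hw : ((q : ℝ) ^ (k + 1)) ≠ 0 := pow_ne_zero _ hq0
  have h5' : (q : ℝ) ^ (k + 1) - 1 ≠ 0 := sub_ne_zero.mpr hqk1
  have e4 : qPoch q ((q ^ k)⁻¹) m
      = qPoch q ((q ^ (k + 1))⁻¹) m * (((q : ℝ) ^ (k + 1) - q ^ m)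
          / ((q : ℝ) ^ (k + 1) - 1)) := by
    have hc : ((q : ℝ) ^ k)⁻¹ = ((q : ℝ) ^ (k + 1))⁻¹ * q := by
      rw [pow_succ, mul_inv]; field_simp
    have hcan : ((q : ℝ) ^ (k + 1))⁻¹ * q ^ (k + 1) = 1 := inv_mul_cancel₀ hw
    rw [hc, mul_div_assoc', eq_div_iff h5']
    linear_combination (q : ℝ) ^ (k + 1) * qPoch_shift q ((q ^ (k + 1))⁻¹) m +
      (qPoch q ((q ^ (k + 1))⁻¹ * q) m - qPoch q ((q ^ (k + 1))⁻¹) m * q ^ m) * hcan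
  have e5 := qPoch_succ_last q (α * q) k
  have e3 := qPoch_succ_last q (α * β * q ^ (k + 1)) k
  have e6 : (q : ℝ) ^ ((k + 1) * k / 2) = q ^ (k * (k - 1) / 2) * q ^ k := by
    rw [← pow_add]
    congr 1
    have hd : (k + 1) * k = k * (k - 1) + 2 * k := by
      cases k with
      | zero => rfl
      | succ j => simp [Nat.add_sub_cancel]; ring
    rw [hd, Nat.add_mul_div_left _ _ (by norm_num : (0:ℕ) < 2)]
  have key : (-1 : ℝ) ^ (k + 1) * (q ^ (k * (k - 1) / 2) * q ^ k) *
        (qPoch q (α * q) k * (1 - α * q * q ^ k) /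
          (qPoch q (α * β * q ^ (k + 1)) k * (1 - α * β * q ^ (k + 1) * q ^ k)))
      = (-1 : ℝ) ^ (k + 1) * (q ^ (k * (k - 1) / 2) * q ^ k) *
          (qPoch q (α * q) k * (1 - α * q * q ^ k) /
            (qPoch q (α * β * q ^ (k + 1)) k * (1 - α * β * q ^ (k + 1) * q ^ k) *
              (1 - α * β * q ^ (k + 1) * q ^ (k + 1)) / (1 - α * β * q ^ (k + 1)))) *
          ((1 - α * β * q ^ (k + 1) * q ^ m) / (1 - α * β * q ^ (k + 1)))
        - (α * β * q ^ (2 * (k + 1)) * (q ^ (k + 1) - 1) * (α * q ^ (k + 1) - 1) /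
            ((α * β * q ^ (2 * (k + 1)) - 1) * (α * β * q ^ (2 * (k + 1)) - q))) *
          ((-1 : ℝ) ^ k * q ^ (k * (k - 1) / 2) *
            (qPoch q (α * q) k / qPoch q (α * β * q ^ (k + 1)) k)) *
          (((q : ℝ) ^ (k + 1) - q ^ m) / ((q : ℝ) ^ (k + 1) - 1)) := by
    have e2k : q ^ (2 * (k + 1)) = q ^ (k + 1) * q ^ (k + 1) := by ring
    rw [e2k]
    generalize qPoch q (α * β * q ^ (k + 1)) k = P at h8 ⊢
    generalize q ^ (k * (k - 1) / 2) = R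
    generalize q ^ m = M
    rw [pow_succ q k] at h1 h3 h4 h5' ⊢
    generalize q ^ k = Q at h1 h3 h4 h5' ⊢
    rw [show α * β * (Q * q * (Q * q)) - q = -q * (1 - α * β * (Q * q) * Q) by ring,
      show α * β * (Q * q * (Q * q)) - 1 = -(1 - α * β * (Q * q) * (Q * q)) by ring]
    generalize 1 - α * β * (Q * q) * Q = D3 at h3 ⊢
    generalize hD4 : 1 - α * β * (Q * q) * (Q * q) = D4 at h4 ⊢
    generalize 1 - α * β * (Q * q) = D1 at h1 ⊢
    field_simp
    rw [← hD4]
    ring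
  rw [e1, e2, e4, e5, e6, e3]
  linear_combination (qPoch q ((q ^ (k + 1))⁻¹) m * qPoch q (α * β * q ^ (k + 1)) m *
    (q * x) ^ m / (qPoch q (α * q) m * qPoch q q m)) * key
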